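/- Let β > 0, let ω_a, ω_b > 0 with ω_a ≠ ω_b, and set ΔS = β|g|² (ω_a tanh(βω_a/2) − ω_b tanh(βω_b/2))/(ω_a² − ω_b²). Then ΔS is equal to β|g|² [ ((1−e^{−β(ω_a−ω_b)})/(ω_a−ω_b)) · (1 − n_a) n_b + ((1−e^{−β(ω_a+ω_b)})/(ω_a+ω_b)) · (1−n_a)(1−n_b) ], where n_i = 1/(e^{βω_i}+1) for i ∈ {a,b}; in particular ΔS > 0. -/

import Mathlib

lemma tanh_half (x : ℝ) : Real.tanh (x/2) = (Real.exp x - 1)/(Real.exp x + 1) := by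
  rw [Real.tanh_eq_sinh_div_cosh, Real.sinh_eq, Real.cosh_eq]
  have h : (0:ℝ) < Real.exp (x/2) := Real.exp_pos _
  have h2 : Real.exp (x/2) * Real.exp (x/2) = Real.exp x := by
    rw [← Real.exp_add]; ring_nf
  have h3 : Real.exp (-x/2) * Real.exp (x/2) = 1 := by
    rw [← Real.exp_add]; ring_nf; exact Real.exp_zero
  have hpos : (0:ℝ) < Real.exp x + 1 := by positivity
  have hden : (0:ℝ) < (Real.exp (x/2) + Real.exp (-(x/2))) / 2 := by positivity
  field_simp
  rw [neg_div] at h3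
  linear_combination (2 * Real.exp (-(x/2))) * h2 - (2 * Real.exp (x/2)) * h3

theorem information_loss_two_two_level_systems
    (β : ℝ) (hβ : 0 < β) (g : ℂ) (hg : g ≠ 0)
    (ωa ωb : ℝ) (hωa : 0 < ωa) (hωb : 0 < ωb) (hne : ωa ≠ ωb)
    (na nb ΔS : ℝ)
    (hna : na = 1 / (Real.exp (β * ωa) + 1))
    (hnb : nb = 1 / (Real.exp (β * ωb) + 1))
    (hΔS : ΔS = β * ‖g‖ ^ 2 *
      (ωa * Real.tanh (β * ωa / 2) - ωb * Real.tanh (β * ωb / 2)) / (ωa ^ 2 - ωb ^ 2)) :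
    ΔS = β * ‖g‖ ^ 2 *
        ((1 - Real.exp (-(β * (ωa - ωb)))) / (ωa - ωb) * ((1 - na) * nb)
          + (1 - Real.exp (-(β * (ωa + ωb)))) / (ωa + ωb) * ((1 - na) * (1 - nb)))
      ∧ 0 < ΔS := by
  set a := Real.exp (β * ωa) with ha
  set b := Real.exp (β * ωb) with hb
  have hapos : (0:ℝ) < a := Real.exp_pos _
  have hbpos : (0:ℝ) < b := Real.exp_pos _
  have ha1 : a + 1 ≠ 0 := by positivity
  have hb1 : b + 1 ≠ 0 := by positivity
  have hd : ωa - ωb ≠ 0 := sub_ne_zero.mpr hne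
  have hs : (0:ℝ) < ωa + ωb := by linarith
  have he1 : Real.exp (-(β * (ωa - ωb))) = b / a := by
    rw [ha, hb, ← Real.exp_sub]; ring_nf
  have he2 : Real.exp (-(β * (ωa + ωb))) = 1 / (a * b) := by
    rw [Real.exp_neg, one_div, ha, hb, ← Real.exp_add, mul_add]
  have hsq : ωa ^ 2 - ωb ^ 2 = (ωa - ωb) * (ωa + ωb) := by ring
  have key : (ωa * Real.tanh (β * ωa / 2) - ωb * Real.tanh (β * ωb / 2)) / (ωa ^ 2 - ωb ^ 2)
      = ((1 - b / a) / (ωa - ωb) * ((1 - na) * nb)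
          + (1 - 1 / (a * b)) / (ωa + ωb) * ((1 - na) * (1 - nb))) := by
    rw [tanh_half, tanh_half, hna, hnb, hsq, ← ha, ← hb]
    field_simp
    ring
  have heq : ΔS = β * ‖g‖ ^ 2 *
        ((1 - Real.exp (-(β * (ωa - ωb)))) / (ωa - ωb) * ((1 - na) * nb)
          + (1 - Real.exp (-(β * (ωa + ωb)))) / (ωa + ωb) * ((1 - na) * (1 - nb))) := by
    rw [hΔS, he1, he2, mul_div_assoc, key]
  refine ⟨heq, ?_⟩
  have hg2 : (0:ℝ) < ‖g‖ ^ 2 := by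
    have := norm_pos_iff.mpr hg; positivity
  have hna' : 0 < 1 - na := by
    rw [hna, sub_pos, div_lt_one (by positivity : (0:ℝ) < a + 1)]; linarith
  have hnb' : 0 < nb := by rw [hnb]; positivity
  have hnb'' : 0 < 1 - nb := by
    rw [hnb, sub_pos, div_lt_one (by positivity : (0:ℝ) < b + 1)]; linarith
  have ht1 : 0 < (1 - Real.exp (-(β * (ωa - ωb)))) / (ωa - ωb) := by
    rcases lt_or_gt_of_ne hd with h | h
    · apply div_pos_of_neg_of_neg _ h
      have : 1 < Real.exp (-(β * (ωa - ωb))) := by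
        rw [← Real.exp_zero]
        exact Real.exp_lt_exp.mpr (by nlinarith)
      linarith
    · apply div_pos _ h
      have : Real.exp (-(β * (ωa - ωb))) < 1 := by
        rw [Real.exp_lt_one_iff]; nlinarith
      linarith
  have ht2 : 0 < (1 - Real.exp (-(β * (ωa + ωb)))) / (ωa + ωb) := by
    apply div_pos _ hs
    have : Real.exp (-(β * (ωa + ωb))) < 1 := by
      rw [Real.exp_lt_one_iff]; nlinarith
    linarith
  rw [heq]
  exact mul_pos (mul_pos hβ hg2)
    (add_pos (mul_pos ht1 (mul_pos hna' hnb')) (mul_pos ht2 (mul_pos hna' hnb'')))
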